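/- If x is a Hilbert-Schmidt operator on H satisfying xJ = -Jx*, then the operator exponential e^x belongs to Sp₂(H); that is, e^x is invertible, (e^x)* J e^x = J, and e^x - 1 is Hilbert-Schmidt. -/

import Mathlib

open scoped RealInnerProductSpace
open ContinuousLinearMap

noncomputable section

variable {ι H : Type*} [NormedAddCommGroup H] [InnerProductSpace ℝ H] [CompleteSpace H]

/-- `x` is a Hilbert-Schmidt operator (with respect to the Hilbert basis `b`). -/
def IsHS (b : HilbertBasis ι ℝ H) (x : H →L[ℝ] H) : Prop :=
  Summable fun i => ‖x (b i)‖ ^ 2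

/-- The Hilbert-Schmidt norm `‖x‖₂`. -/
def hsNorm (b : HilbertBasis ι ℝ H) (x : H →L[ℝ] H) : ℝ :=
  Real.sqrt (∑' i, ‖x (b i)‖ ^ 2)

/-- The trace inner product `⟨x, y⟩ = Tr (y* x)`. -/
def hsInner (b : HilbertBasis ι ℝ H) (x y : H →L[ℝ] H) : ℝ :=
  ∑' i, ⟪x (b i), y (b i)⟫

/-- `J` is a complex structure: `J² = -1` and `J* = -J`. -/
def IsCplxStruct (J : H →L[ℝ] H) : Prop :=
  J * J = -1 ∧ star J = -J

/-- The symplectic group `Sp(H)`. -/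
def Sp (J : H →L[ℝ] H) : Set (H →L[ℝ] H) :=
  {g | IsUnit g ∧ star g * J * g = J}

/-- The restricted symplectic group `Sp₂(H)`. -/
def Sp2 (b : HilbertBasis ι ℝ H) (J : H →L[ℝ] H) : Set (H →L[ℝ] H) :=
  {g | g ∈ Sp J ∧ IsHS b (g - 1)}

/-- The Banach-Lie algebra `sp₂(H) = {x ∈ B₂(H) : xJ = -Jx*}`. -/
def sp2 (b : HilbertBasis ι ℝ H) (J : H →L[ℝ] H) : Set (H →L[ℝ] H) :=
  {x | IsHS b x ∧ x * J = -(J * star x)}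

/-- The Hermitian part of `sp₂(H)`. -/
def sp2h (b : HilbertBasis ι ℝ H) (J : H →L[ℝ] H) : Set (H →L[ℝ] H) :=
  {x ∈ sp2 b J | IsSelfAdjoint x}

/-- The anti-Hermitian part of `sp₂(H)`. -/
def sp2ah (b : HilbertBasis ι ℝ H) (J : H →L[ℝ] H) : Set (H →L[ℝ] H) :=
  {x ∈ sp2 b J | star x = -x}

/-- The positive part `Sp₂⁺(H)` of the restricted symplectic group. -/
def Sp2pos (b : HilbertBasis ι ℝ H) (J : H →L[ℝ] H) : Set (H →L[ℝ] H) :=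
  {g ∈ Sp2 b J | g.IsPositive}

/-- The restricted unitary group `U₂(H_J)` of unitaries commuting with `J` which are
Hilbert-Schmidt perturbations of the identity. -/
def U2J (b : HilbertBasis ι ℝ H) (J : H →L[ℝ] H) : Set (H →L[ℝ] H) :=
  {u | star u * u = 1 ∧ u * star u = 1 ∧ u * J = J * u ∧ IsHS b (u - 1)}

open scoped Classical in
/-- The positive square root `a^{1/2}` of a positive operator (junk value otherwise). -/
def psqrt (a : H →L[ℝ] H) : H →L[ℝ] H :=
  if h : ∃ s : H →L[ℝ] H, s.IsPositive ∧ s * s = a then h.choose else 0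

/-- A piecewise smooth curve parametrized on `[0,1]`. -/
def PiecewiseSmooth (α : ℝ → (H →L[ℝ] H)) : Prop :=
  ContinuousOn α (Set.Icc 0 1) ∧ ∃ n : ℕ, ∃ t : Fin (n + 1) → ℝ,
    StrictMono t ∧ t 0 = 0 ∧ t (Fin.last n) = 1 ∧
    ∀ i : Fin n, ContDiffOn ℝ 1 α (Set.Icc (t i.castSucc) (t i.succ))

/-- Length of a curve with respect to a metric `F` on tangent vectors. -/
def lengthWith (F : (H →L[ℝ] H) → (H →L[ℝ] H) → ℝ) (α : ℝ → (H →L[ℝ] H)) : ℝ :=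
  ∫ t in (0:ℝ)..1, F (α t) (deriv α t)

/-- Piecewise smooth curves inside `S` joining `p` to `q`. -/
def pathsIn (S : Set (H →L[ℝ] H)) (p q : H →L[ℝ] H) : Set (ℝ → (H →L[ℝ] H)) :=
  {α | PiecewiseSmooth α ∧ (∀ t ∈ Set.Icc (0:ℝ) 1, α t ∈ S) ∧ α 0 = p ∧ α 1 = q}

/-- The geodesic distance in `S` associated to the metric `F`. -/
def gdist (S : Set (H →L[ℝ] H)) (F : (H →L[ℝ] H) → (H →L[ℝ] H) → ℝ)
    (p q : H →L[ℝ] H) : ℝ :=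
  sInf (lengthWith F '' pathsIn S p q)

/-- The left invariant metric `I(g,v) = ‖g⁻¹ v‖₂`. -/
def leftMet (b : HilbertBasis ι ℝ H) : (H →L[ℝ] H) → (H →L[ℝ] H) → ℝ :=
  fun g v => hsNorm b (Ring.inverse g * v)

/-- The metric of positive operators `𝔭(a,x) = ‖a^{-1/2} x a^{-1/2}‖₂`. -/
def posMet (b : HilbertBasis ι ℝ H) : (H →L[ℝ] H) → (H →L[ℝ] H) → ℝ :=
  fun a x => hsNorm b (Ring.inverse (psqrt a) * x * Ring.inverse (psqrt a))

/-- The ambient metric `𝔭_amb(g,x) = ‖x‖₂`. -/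
def ambMet (b : HilbertBasis ι ℝ H) : (H →L[ℝ] H) → (H →L[ℝ] H) → ℝ :=
  fun _ x => hsNorm b x



lemma norm_pow_le_clm (x : H →L[ℝ] H) : ∀ n : ℕ, ‖x ^ n‖ ≤ ‖x‖ ^ n := by
  intro n
  induction n with
  | zero => simpa using (show ‖(1 : H →L[ℝ] H)‖ ≤ 1 from ContinuousLinearMap.norm_id_le)
  | succ n ih =>
    calc ‖x ^ (n + 1)‖ = ‖x ^ n * x‖ := by rw [pow_succ]
      _ ≤ ‖x ^ n‖ * ‖x‖ := norm_mul_le _ _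
      _ ≤ ‖x‖ ^ n * ‖x‖ := by gcongr
      _ = ‖x‖ ^ (n + 1) := by rw [pow_succ]

lemma isHS_mul_left' (b : HilbertBasis ι ℝ H) (y x : H →L[ℝ] H) (hx : IsHS b x) :
    IsHS b (y * x) := by
  refine Summable.of_nonneg_of_le (fun i => by positivity) (fun i => ?_)
    (hx.mul_left (‖y‖ ^ 2))
  have h1 : ‖(y * x) (b i)‖ ≤ ‖y‖ * ‖x (b i)‖ := y.le_opNorm _
  calc ‖(y * x) (b i)‖ ^ 2 ≤ (‖y‖ * ‖x (b i)‖) ^ 2 :=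
        pow_le_pow_left₀ (norm_nonneg _) h1 2
    _ = ‖y‖ ^ 2 * ‖x (b i)‖ ^ 2 := by ring

set_option synthInstance.maxHeartbeats 400000 in
set_option maxHeartbeats 1000000 in
lemma exp_sub_one_factor (x : H →L[ℝ] H) :
    NormedSpace.exp x - 1 = (∑' n : ℕ, (((n + 1).factorial : ℝ))⁻¹ • x ^ n) * x := by
  have hs : Summable fun n : ℕ => ((n.factorial : ℝ))⁻¹ • x ^ n :=
    NormedSpace.expSeries_summable' (𝕂 := ℝ) x
  have hs' : Summable fun n : ℕ => (((n + 1).factorial : ℝ))⁻¹ • x ^ n := by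
    refine Summable.of_norm_bounded
      (Real.summable_pow_div_factorial ‖x‖) (fun n => ?_)
    have hfac : (n.factorial : ℝ) ≤ ((n + 1).factorial : ℝ) := by
      exact_mod_cast Nat.factorial_le (Nat.le_succ n)
    have hfacpos : (0 : ℝ) < n.factorial := by exact_mod_cast n.factorial_pos
    calc ‖(((n + 1).factorial : ℝ))⁻¹ • x ^ n‖
        = (((n + 1).factorial : ℝ))⁻¹ * ‖x ^ n‖ := by
          rw [norm_smul (((n + 1).factorial : ℝ))⁻¹ (x ^ n), Real.norm_eq_abs, abs_inv,
            Nat.abs_cast]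
      _ ≤ (n.factorial : ℝ)⁻¹ * ‖x‖ ^ n :=
          mul_le_mul (inv_anti₀ hfacpos hfac) (norm_pow_le_clm x n)
            (norm_nonneg _) (inv_pos.mpr hfacpos).le
      _ = ‖x‖ ^ n / n.factorial := (div_eq_inv_mul _ _).symm
  have h0 : NormedSpace.exp x = ∑' n : ℕ, ((n.factorial : ℝ))⁻¹ • x ^ n := by
    rw [NormedSpace.exp_eq_tsum ℝ]
  rw [h0, hs.tsum_eq_zero_add]
  simp only [Nat.factorial_zero, pow_zero, Nat.cast_one, inv_one, one_smul]
  rw [add_sub_cancel_left, ← hs'.tsum_mul_right x]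
  exact tsum_congr fun n => by rw [smul_mul_assoc, ← pow_succ]

/-- the exponential of an element of `sp₂(H)` lies in `Sp₂(H)`. -/
theorem exp_mem_Sp2 (b : HilbertBasis ι ℝ H) (J : H →L[ℝ] H) (hJ : IsCplxStruct J)
    (x : H →L[ℝ] H) (hx : x ∈ sp2 b J) :
    NormedSpace.exp x ∈ Sp2 b J := by
  let +nondep : NormedAlgebra ℚ (H →L[ℝ] H) := .restrictScalars ℚ ℝ (H →L[ℝ] H)
  obtain ⟨hxHS, hxJ⟩ := hx
  obtain ⟨hJ2, hJs⟩ := hJ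
  have hJJ : J * -J = 1 := by rw [mul_neg, hJ2]; simp
  have hJJ' : -J * J = 1 := by rw [neg_mul, hJ2]; simp
  set u : (H →L[ℝ] H)ˣ := ⟨J, -J, hJJ, hJJ'⟩ with hu
  have hstarx : star x = (u : H →L[ℝ] H) * (-x) * ((u⁻¹ : (H →L[ℝ] H)ˣ) : H →L[ℝ] H) := by
    have h1 : J * (x * J) = J * (-(J * star x)) := by rw [hxJ]
    have h2 : J * (-(J * star x)) = star x := by
      rw [mul_neg, ← mul_assoc, hJ2]; simp
    have : star x = J * x * J := by rw [← h2, ← h1, mul_assoc]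
    simpa [hu, mul_assoc] using this
  have hexpstar : star (NormedSpace.exp x)
      = (u : H →L[ℝ] H) * NormedSpace.exp (-x) * ((u⁻¹ : (H →L[ℝ] H)ˣ) : H →L[ℝ] H) := by
    rw [NormedSpace.star_exp, hstarx, NormedSpace.exp_units_conj]
  have hcomm : Commute (-x) x := (Commute.refl x).neg_left
  have hinv : NormedSpace.exp (-x) * NormedSpace.exp x = 1 := by
    rw [← NormedSpace.exp_add_of_commute hcomm, neg_add_cancel, NormedSpace.exp_zero]
  refine ⟨⟨NormedSpace.isUnit_exp x, ?_⟩, ?_⟩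
  · have huinv : ((u⁻¹ : (H →L[ℝ] H)ˣ) : H →L[ℝ] H) = -J := rfl
    rw [hexpstar, huinv]
    show J * NormedSpace.exp (-x) * -J * J * NormedSpace.exp x = J
    rw [mul_assoc _ (-J) J, hJJ', mul_one, mul_assoc, hinv, mul_one]
  · rw [show NormedSpace.exp x - 1
        = (∑' n : ℕ, (((n + 1).factorial : ℝ))⁻¹ • x ^ n) * x from exp_sub_one_factor x]
    exact isHS_mul_left' b _ x hxHS

end
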